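/- Suppose the Riemann–Hurwitz equation 2(g-1) = N(2h - 2 + Σ_{i=1}^l (1 - 1/m_i)) holds with N a positive integer, g ≥ 2, h ≥ 0, m_i ≥ 2 integers, d := 3h - 3 + l ≥ 2, and N = 4(g-1)/(d-1). Then h = 0, l = d + 3, and every m_i = 2. -/
import Mathlib


/-- In the Riemann–Hurwitz setup with d = 3h - 3 + l ≥ 2, if
N = 4(g-1)/(d-1) then h = 0, l = d + 3 and every period equals 2. -/
theorem order_bound_equality_dim_ge_two (N g d h l : ℕ) (m : Fin l → ℕ)
    (hN : 1 ≤ N) (hg : 2 ≤ g) (hm : ∀ i, 2 ≤ m i)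
    (hd : 2 ≤ d) (hdim : 3 * (h : ℤ) - 3 + l = d)
    (hRH : 2 * ((g : ℚ) - 1) = N * (2 * (h : ℚ) - 2 + ∑ i, (1 - 1 / (m i : ℚ))))
    (heq : (N : ℚ) = 4 * ((g : ℚ) - 1) / ((d : ℚ) - 1)) :
    h = 0 ∧ l = d + 3 ∧ ∀ i, m i = 2 := by
  have hd1 : (d : ℚ) - 1 ≠ 0 := by
    have : (2 : ℚ) ≤ (d : ℚ) := by exact_mod_cast hd
    linarith
  have hNq : (N : ℚ) ≠ 0 := by
    have : (1 : ℚ) ≤ (N : ℚ) := by exact_mod_cast hN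
    linarith
  have hNd : (N : ℚ) * ((d : ℚ) - 1) = 4 * ((g : ℚ) - 1) := by
    field_simp at heq
    linarith
  have hdq : 3 * (h : ℚ) - 3 + l = d := by exact_mod_cast hdim
  have hS : ∑ i, (1 - 1 / (m i : ℚ)) = ((l : ℚ) - h) / 2 := by
    have key : (d : ℚ) - 1 = 2 * (2 * (h : ℚ) - 2 + ∑ i, (1 - 1 / (m i : ℚ))) := by
      have := mul_left_cancel₀ hNq (by linarith [hNd, hRH] :
        (N : ℚ) * ((d : ℚ) - 1) = (N : ℚ) * (2 * (2 * (h : ℚ) - 2 + ∑ i, (1 - 1 / (m i : ℚ))))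
        )
      linarith
    linarith
  have hterm : ∀ i : Fin l, (1 : ℚ) / 2 ≤ 1 - 1 / (m i : ℚ) := by
    intro i
    have h2 : (2 : ℚ) ≤ (m i : ℚ) := by exact_mod_cast hm i
    have hpos : (0 : ℚ) < (m i : ℚ) := by linarith
    have : 1 / (m i : ℚ) ≤ 1 / 2 := by
      apply div_le_div_of_nonneg_left (by norm_num) (by norm_num) h2
    linarith
  have hlow : (l : ℚ) / 2 ≤ ∑ i, (1 - 1 / (m i : ℚ)) := by
    calc (l : ℚ) / 2 = ∑ _i : Fin l, (1 : ℚ) / 2 := by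
          simp [Finset.sum_const, Finset.card_univ]; ring
      _ ≤ _ := Finset.sum_le_sum fun i _ => hterm i
  have hh : h = 0 := by
    have : (h : ℚ) ≤ 0 := by rw [hS] at hlow; linarith
    exact_mod_cast le_antisymm (by exact_mod_cast this) (Nat.zero_le h)
  have hSum : ∑ i, ((1 - 1 / (m i : ℚ)) - 1 / 2) = 0 := by
    rw [Finset.sum_sub_distrib, hS, hh]
    simp [Finset.sum_const, Finset.card_univ]
    ring
  have hall : ∀ i ∈ Finset.univ, ((1 - 1 / (m i : ℚ)) - 1 / 2) = 0 := by
    rw [← Finset.sum_eq_zero_iff_of_nonneg (fun i _ => by linarith [hterm i])]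
    exact hSum
  refine ⟨hh, ?_, ?_⟩
  · omega
  · intro i
    have := hall i (Finset.mem_univ i)
    have hpos : (0 : ℚ) < (m i : ℚ) := by
      have : (2 : ℚ) ≤ (m i : ℚ) := by exact_mod_cast hm i
      linarith
    have : (m i : ℚ) = 2 := by field_simp at this; linarith
    exact_mod_cast this
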